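/- Let R = ℂ[x₁,x₂,y₁,y₂]/(y₁x₁ − x₂ + 1, y₂x₂ − x₁ + 1). Then the localization of R at the element y₂·(1 − y₁y₂) is isomorphic as a ℂ-algebra to the Laurent polynomial ring ℂ[v₁^{±1}, v₂^{±1}], via the map x₁ ↦ −(v₂+1)·v₁^{−1}, x₂ ↦ −(v₁+v₂+1)·(v₁v₂)^{−1}, y₁ ↦ (v₁+1)·v₂^{−1}, y₂ ↦ v₂, whose inverse sends v₁ ↦ y₁y₂ − 1 and v₂ ↦ y₂. -/

import Mathlib

open MvPolynomial AddMonoidAlgebra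

noncomputable section

/-- Relations of the coordinate ring of `S_{1,1}`: variables `x₁ = X 0`, `x₂ = X 1`,
`y₁ = X 2`, `y₂ = X 3`. -/
abbrev srel₀ : Set (MvPolynomial (Fin 4) ℂ) :=
  {X 2 * X 0 - X 1 + 1, X 3 * X 1 - X 0 + 1}

/-- The coordinate ring of `S_{1,1}`. -/
abbrev SRing₀ : Type := MvPolynomial (Fin 4) ℂ ⧸ Ideal.span srel₀

/-- The Laurent polynomial ring `ℂ[v₁^{±1}, v₂^{±1}]`; `v₁^a·v₂^b = single (a,b) 1`. -/
abbrev Laurent2 : Type := AddMonoidAlgebra ℂ (ℤ × ℤ)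

set_option synthInstance.maxHeartbeats 1000000
set_option maxHeartbeats 2000000

namespace Stmt15

def sg (a b : ℤ) : Laurent2 := single (a, b) 1

lemma sg_mul (a b c d : ℤ) : sg a b * sg c d = sg (a + c) (b + d) := by
  simp [sg, single_mul_single, Prod.mk_add_mk]

lemma sg_one : sg 0 0 = 1 := by rw [AddMonoidAlgebra.one_def]; rfl

lemma sg_pow (a b : ℤ) (n : ℕ) : sg a b ^ n = sg (n * a) (n * b) := by
  induction n with
  | zero => simp [sg_one]
  | succ n ih => rw [pow_succ, ih, sg_mul]; congr 1 <;> push_cast <;> ring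

def sgu (a b : ℤ) : Laurent2ˣ :=
  ⟨sg a b, sg (-a) (-b), by rw [sg_mul]; simp [sg_one], by rw [sg_mul]; simp [sg_one]⟩

@[simp] lemma sgu_val (a b : ℤ) : (sgu a b : Laurent2) = sg a b := rfl

lemma sgu_mul (a b c d : ℤ) : sgu a b * sgu c d = sgu (a + c) (b + d) :=
  Units.ext (sg_mul a b c d)

lemma sgu_one : sgu 0 0 = 1 := Units.ext sg_one

lemma sgu_zpow (a b z : ℤ) : sgu a b ^ z = sgu (z * a) (z * b) := by
  induction z using Int.induction_on with
  | zero => simp [sgu_one]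
  | succ n ih =>
      rw [zpow_add_one, ih, sgu_mul]; congr 1 <;> push_cast <;> ring
  | pred n ih =>
      rw [zpow_sub_one, ih]
      have hinv : (sgu a b)⁻¹ = sgu (-a) (-b) := by
        apply inv_eq_of_mul_eq_one_right
        rw [sgu_mul]; simp [sgu_one]
      rw [hinv, sgu_mul]; congr 1 <;> push_cast <;> ring

/-- The forward map on the polynomial ring. -/
def phi : MvPolynomial (Fin 4) ℂ →ₐ[ℂ] Laurent2 :=
  aeval ![ -(sg 0 1 + 1) * sg (-1) 0, -(sg 1 0 + sg 0 1 + 1) * sg (-1) (-1),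
           (sg 1 0 + 1) * sg 0 (-1), sg 0 1 ]

lemma phi_X0 : phi (X 0) = -(sg 0 1 + 1) * sg (-1) 0 := by simp [phi]
lemma phi_X1 : phi (X 1) = -(sg 1 0 + sg 0 1 + 1) * sg (-1) (-1) := by simp [phi]
lemma phi_X2 : phi (X 2) = (sg 1 0 + 1) * sg 0 (-1) := by simp [phi]
lemma phi_X3 : phi (X 3) = sg 0 1 := by simp [phi]

lemma phi_ker : ∀ a ∈ Ideal.span srel₀, phi a = 0 := by
  intro a ha
  have h : Ideal.span srel₀ ≤ RingHom.ker phi.toRingHom := by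
    rw [Ideal.span_le]
    rintro p hp
    simp only [Set.mem_insert_iff, Set.mem_singleton_iff] at hp
    rcases hp with rfl | rfl <;>
      simp only [SetLike.mem_coe, RingHom.mem_ker, AlgHom.toRingHom_eq_coe,
        RingHom.coe_coe, map_add, map_sub, map_mul, map_one, phi_X0, phi_X1, phi_X2, phi_X3] <;>
      · rw [← sg_one]; ring_nf; simp only [sg_mul, sg_pow]; ring_nf
  exact h ha

def phiQ : SRing₀ →ₐ[ℂ] Laurent2 := Ideal.Quotient.liftₐ _ phi phi_ker

lemma phiQ_mk (p : MvPolynomial (Fin 4) ℂ) :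
    phiQ (Ideal.Quotient.mk _ p) = phi p := by
  simp [phiQ, Ideal.Quotient.liftₐ_apply]
  rfl

abbrev t₀ : SRing₀ := Ideal.Quotient.mk (Ideal.span srel₀) (X 3 * (1 - X 2 * X 3))

abbrev Loc : Type := Localization.Away t₀

lemma phiQ_t₀ : phiQ t₀ = -sg 1 1 := by
  rw [phiQ_mk]
  simp only [map_mul, map_sub, map_one, phi_X2, phi_X3]
  rw [← sg_one]; ring_nf; simp only [sg_mul, sg_pow]; ring_nf

lemma phiQ_t₀_isUnit : IsUnit (phiQ t₀) := by
  rw [phiQ_t₀]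
  exact IsUnit.neg ⟨sgu 1 1, rfl⟩

lemma phiQ_pows : ∀ y : Submonoid.powers t₀, IsUnit (phiQ (y : SRing₀)) := by
  rintro ⟨y, n, rfl⟩
  rw [map_pow]
  exact phiQ_t₀_isUnit.pow n

/-- forward map on the localization -/
def psi : Loc →ₐ[ℂ] Laurent2 := IsLocalization.liftAlgHom (M := Submonoid.powers t₀) (S := Loc) phiQ_pows

lemma psi_A (r : SRing₀) : psi (algebraMap SRing₀ Loc r) = phiQ r := by
  rw [psi, IsLocalization.liftAlgHom_apply, IsLocalization.lift_eq]
  rfl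

-- units in the localization
lemma hu2 : IsUnit (algebraMap SRing₀ Loc (Ideal.Quotient.mk (Ideal.span srel₀) (X 3))) := by
  apply isUnit_of_mul_isUnit_left (y := algebraMap SRing₀ Loc
    (Ideal.Quotient.mk (Ideal.span srel₀) (1 - X 2 * X 3)))
  rw [← map_mul, ← map_mul]
  exact IsLocalization.Away.algebraMap_isUnit (S := Loc) t₀

lemma hu1 : IsUnit (algebraMap SRing₀ Loc (Ideal.Quotient.mk (Ideal.span srel₀) (X 2 * X 3 - 1))) := by
  apply isUnit_of_mul_isUnit_left (y := algebraMap SRing₀ Loc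
    (Ideal.Quotient.mk (Ideal.span srel₀) (-X 3)))
  rw [← map_mul, ← map_mul]
  have : ((X 2 * X 3 - 1) * (-X 3) : MvPolynomial (Fin 4) ℂ) = X 3 * (1 - X 2 * X 3) := by ring
  rw [this]
  exact IsLocalization.Away.algebraMap_isUnit (S := Loc) t₀

def u1 : Locˣ := hu1.unit
def u2 : Locˣ := hu2.unit

lemma u1_val : (u1 : Loc) = algebraMap SRing₀ Loc (Ideal.Quotient.mk (Ideal.span srel₀) (X 2 * X 3 - 1)) :=
  hu1.unit_spec

lemma u2_val : (u2 : Loc) = algebraMap SRing₀ Loc (Ideal.Quotient.mk (Ideal.span srel₀) (X 3)) :=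
  hu2.unit_spec

/-- the monoid hom for the inverse map -/
def F : Multiplicative (ℤ × ℤ) →* Loc where
  toFun m := ((u1 ^ (Multiplicative.toAdd m).1 * u2 ^ (Multiplicative.toAdd m).2 : Locˣ) : Loc)
  map_one' := by simp
  map_mul' x y := by
    simp only [toAdd_mul, Prod.fst_add, Prod.snd_add, zpow_add, Units.val_mul]
    ring

def ginv : Laurent2 →ₐ[ℂ] Loc := AddMonoidAlgebra.lift ℂ Loc (ℤ × ℤ) F

lemma ginv_single (a b : ℤ) :
    ginv (single (a, b) 1) = ((u1 ^ a * u2 ^ b : Locˣ) : Loc) := by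
  rw [ginv, AddMonoidAlgebra.lift_single, one_smul]
  rfl

lemma psi_u1 : psi (u1 : Loc) = sg 1 0 := by
  rw [u1_val, psi_A, phiQ_mk]
  simp only [map_sub, map_mul, map_one, phi_X2, phi_X3]
  rw [← sg_one]; ring_nf; simp only [sg_mul, sg_pow]; ring_nf

lemma psi_u2 : psi (u2 : Loc) = sg 0 1 := by
  rw [u2_val, psi_A, phiQ_mk, phi_X3]

lemma comp1 : psi.comp ginv = AlgHom.id ℂ Laurent2 := by
  apply AddMonoidAlgebra.algHom_ext
  rintro ⟨a, b⟩
  rw [AlgHom.comp_apply, ginv_single, AlgHom.id_apply]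
  set f : Loc →* Laurent2 := (psi : Loc →+* Laurent2).toMonoidHom with hf
  have key : ∀ w : Locˣ, psi (w : Loc) = ((Units.map f w : Laurent2ˣ) : Laurent2) := by
    intro w; rw [Units.coe_map]; rfl
  rw [key]
  have h1 : Units.map f u1 = sgu 1 0 := Units.ext (by rw [Units.coe_map]; exact psi_u1)
  have h2 : Units.map f u2 = sgu 0 1 := Units.ext (by rw [Units.coe_map]; exact psi_u2)
  rw [map_mul, map_zpow, map_zpow, h1, h2, sgu_zpow, sgu_zpow, sgu_mul]
  simp [sg]
  exact Subsingleton.elim _ _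

-- membership computations for the other direction
lemma mem0 : (X 0 * (X 2 * X 3 - 1) + X 3 + 1 : MvPolynomial (Fin 4) ℂ) ∈
    Ideal.span srel₀ := by
  have h : (X 0 * (X 2 * X 3 - 1) + X 3 + 1 : MvPolynomial (Fin 4) ℂ) =
      X 3 * (X 2 * X 0 - X 1 + 1) + (X 3 * X 1 - X 0 + 1) := by ring
  rw [h]
  exact Ideal.add_mem _
    (Ideal.mul_mem_left _ _ (Ideal.subset_span (Or.inl rfl)))
    (Ideal.subset_span (Or.inr rfl))

lemma mem1 : (X 1 * (X 2 * X 3 - 1) * X 3 + X 2 * X 3 + X 3 : MvPolynomial (Fin 4) ℂ) ∈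
    Ideal.span srel₀ := by
  have h : (X 1 * (X 2 * X 3 - 1) * X 3 + X 2 * X 3 + X 3 : MvPolynomial (Fin 4) ℂ) =
      X 3 * (X 2 * X 0 - X 1 + 1) + (X 2 * X 3) * (X 3 * X 1 - X 0 + 1) := by ring
  rw [h]
  exact Ideal.add_mem _
    (Ideal.mul_mem_left _ _ (Ideal.subset_span (Or.inl rfl)))
    (Ideal.mul_mem_left _ _ (Ideal.subset_span (Or.inr rfl)))

abbrev B : MvPolynomial (Fin 4) ℂ →+* Loc :=
  (algebraMap SRing₀ Loc).comp (Ideal.Quotient.mk (Ideal.span srel₀))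

lemma ginv_sg (a b : ℤ) : ginv (sg a b) = ((u1 ^ a * u2 ^ b : Locˣ) : Loc) :=
  ginv_single a b

lemma gp0 : ginv (psi (B (X 0))) = B (X 0) := by
  rw [RingHom.comp_apply, psi_A, phiQ_mk, phi_X0]
  rw [map_mul, map_neg, map_add, map_one, ginv_sg, ginv_sg]
  simp only [zpow_zero, zpow_one, zpow_neg_one, one_mul, mul_one, Units.val_mul]
  rw [Units.mul_inv_eq_iff_eq_mul]
  have hu : (u2 : Loc) = B (X 3) := u2_val
  have hu' : (u1 : Loc) = B (X 2 * X 3 - 1) := u1_val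
  rw [hu, hu', ← map_one B, ← map_add, ← map_neg]
  show B (-(X 3 + 1)) = B (X 0) * B (X 2 * X 3 - 1)
  rw [← map_mul]
  refine congrArg (algebraMap SRing₀ Loc) (Ideal.Quotient.eq.mpr ?_)
  have h : (-(X 3 + 1) - X 0 * (X 2 * X 3 - 1) : MvPolynomial (Fin 4) ℂ) =
      -(X 0 * (X 2 * X 3 - 1) + X 3 + 1) := by ring
  rw [h]
  exact neg_mem mem0

lemma gp1 : ginv (psi (B (X 1))) = B (X 1) := by
  rw [RingHom.comp_apply, psi_A, phiQ_mk, phi_X1]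
  rw [map_mul, map_neg, map_add, map_add, map_one, ginv_sg, ginv_sg, ginv_sg]
  simp only [zpow_zero, zpow_one, zpow_neg_one, one_mul, mul_one, Units.val_mul]
  rw [← mul_assoc, Units.mul_inv_eq_iff_eq_mul, Units.mul_inv_eq_iff_eq_mul]
  have hu : (u2 : Loc) = B (X 3) := u2_val
  have hu' : (u1 : Loc) = B (X 2 * X 3 - 1) := u1_val
  rw [hu, hu', ← map_one B, ← map_add, ← map_add, ← map_neg]
  show B (-(X 2 * X 3 - 1 + X 3 + 1)) = B (X 1) * B (X 3) * B (X 2 * X 3 - 1)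
  rw [← map_mul, ← map_mul]
  refine congrArg (algebraMap SRing₀ Loc) (Ideal.Quotient.eq.mpr ?_)
  have h : (-(X 2 * X 3 - 1 + X 3 + 1) - X 1 * X 3 * (X 2 * X 3 - 1) :
      MvPolynomial (Fin 4) ℂ) = -(X 1 * (X 2 * X 3 - 1) * X 3 + X 2 * X 3 + X 3) := by ring
  rw [h]
  exact neg_mem mem1

lemma gp2 : ginv (psi (B (X 2))) = B (X 2) := by
  rw [RingHom.comp_apply, psi_A, phiQ_mk, phi_X2]
  rw [map_mul, map_add, map_one, ginv_sg, ginv_sg]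
  simp only [zpow_zero, zpow_one, zpow_neg_one, one_mul, mul_one, Units.val_mul]
  rw [Units.mul_inv_eq_iff_eq_mul]
  have hu : (u2 : Loc) = B (X 3) := u2_val
  have hu' : (u1 : Loc) = B (X 2 * X 3 - 1) := u1_val
  rw [hu, hu', ← map_one B, ← map_add]
  show B (X 2 * X 3 - 1 + 1) = B (X 2) * B (X 3)
  rw [← map_mul]
  exact congrArg (algebraMap SRing₀ Loc)
    (congrArg (Ideal.Quotient.mk (Ideal.span srel₀)) (by ring))

lemma gp3 : ginv (psi (B (X 3))) = B (X 3) := by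
  rw [RingHom.comp_apply, psi_A, phiQ_mk, phi_X3, ginv_sg]
  simp only [zpow_zero, zpow_one, one_mul, mul_one]
  exact u2_val

lemma comp2 : ginv.comp psi = AlgHom.id ℂ Loc := by
  have hC : ∀ r : ℂ, ginv (psi (B (C r))) = B (C r) := by
    intro r
    have hCr : (Ideal.Quotient.mk (Ideal.span srel₀)) (C r) = algebraMap ℂ SRing₀ r := rfl
    show ginv (psi (algebraMap SRing₀ Loc (Ideal.Quotient.mk (Ideal.span srel₀) (C r)))) = _
    rw [hCr, ← IsScalarTower.algebraMap_apply, AlgHom.commutes, AlgHom.commutes]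
    show _ = algebraMap SRing₀ Loc (Ideal.Quotient.mk (Ideal.span srel₀) (C r))
    rw [hCr, ← IsScalarTower.algebraMap_apply]
  have hX : ∀ i, ginv (psi (B (X i))) = B (X i) := by
    intro i
    fin_cases i
    · exact gp0
    · exact gp1
    · exact gp2
    · exact gp3
  have h1 : ((ginv.comp psi).toRingHom.comp (algebraMap SRing₀ Loc)).comp
        (Ideal.Quotient.mk (Ideal.span srel₀)) =
      ((AlgHom.id ℂ Loc).toRingHom.comp (algebraMap SRing₀ Loc)).comp
        (Ideal.Quotient.mk (Ideal.span srel₀)) :=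
    MvPolynomial.ringHom_ext hC hX
  have h2 := Ideal.Quotient.ringHom_ext h1
  have h3 := IsLocalization.ringHom_ext (S := Loc) (P := Loc) (Submonoid.powers t₀) h2
  exact AlgHom.ext fun x => DFunLike.congr_fun h3 x

def e : Loc ≃ₐ[ℂ] Laurent2 := AlgEquiv.ofAlgHom psi ginv comp1 comp2

end Stmt15

open Stmt15

theorem stmt_15 :
    ∃ e : Localization.Away
        (Ideal.Quotient.mk (Ideal.span srel₀) (X 3 * (1 - X 2 * X 3))) ≃ₐ[ℂ] Laurent2,
      -- x₁ ↦ −(v₂+1)·v₁⁻¹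
      e (algebraMap SRing₀ _ (Ideal.Quotient.mk _ (X 0))) =
        -(single ((0 : ℤ), (1 : ℤ)) 1 + 1) * single ((-1 : ℤ), (0 : ℤ)) 1 ∧
      -- x₂ ↦ −(v₁+v₂+1)·(v₁v₂)⁻¹
      e (algebraMap SRing₀ _ (Ideal.Quotient.mk _ (X 1))) =
        -(single ((1 : ℤ), (0 : ℤ)) 1 + single ((0 : ℤ), (1 : ℤ)) 1 + 1) *
          single ((-1 : ℤ), (-1 : ℤ)) 1 ∧
      -- y₁ ↦ (v₁+1)·v₂⁻¹
      e (algebraMap SRing₀ _ (Ideal.Quotient.mk _ (X 2))) =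
        (single ((1 : ℤ), (0 : ℤ)) 1 + 1) * single ((0 : ℤ), (-1 : ℤ)) 1 ∧
      -- y₂ ↦ v₂
      e (algebraMap SRing₀ _ (Ideal.Quotient.mk _ (X 3))) =
        single ((0 : ℤ), (1 : ℤ)) 1 ∧
      -- inverse: v₁ ↦ y₁y₂ − 1, v₂ ↦ y₂
      e.symm (single ((1 : ℤ), (0 : ℤ)) 1) =
        algebraMap SRing₀ _ (Ideal.Quotient.mk _ (X 2 * X 3 - 1)) ∧
      e.symm (single ((0 : ℤ), (1 : ℤ)) 1) =
        algebraMap SRing₀ _ (Ideal.Quotient.mk _ (X 3)) := by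
  refine ⟨Stmt15.e, ?_, ?_, ?_, ?_, ?_, ?_⟩
  · show psi _ = _
    rw [psi_A, phiQ_mk, phi_X0]; rfl
  · show psi _ = _
    rw [psi_A, phiQ_mk, phi_X1]; rfl
  · show psi _ = _
    rw [psi_A, phiQ_mk, phi_X2]; rfl
  · show psi _ = _
    rw [psi_A, phiQ_mk, phi_X3]; rfl
  · show ginv _ = _
    rw [show (single ((1 : ℤ), (0 : ℤ)) 1 : Laurent2) = sg 1 0 from rfl, ginv_sg]
    simp only [zpow_one, zpow_zero, mul_one]
    exact u1_val
  · show ginv _ = _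
    rw [show (single ((0 : ℤ), (1 : ℤ)) 1 : Laurent2) = sg 0 1 from rfl, ginv_sg]
    simp only [zpow_one, zpow_zero, one_mul]
    exact u2_val
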